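/- Let φ ∈ R^n and χ ∈ R^k be probability vectors with positive entries, where χ is not constant (it has at least two distinct values). If l_u(χ) > g_u(φ), then for every ψ ∈ R^n that is strictly majorized by φ, the tensor product ψ ⊗ χ is strictly majorized by φ ⊗ χ. -/

import Mathlib

open Finset

/-- `eSum v m` is the sum of the `m` largest entries of `v`
(the supremum of sums over subsets of cardinality `m`). -/
noncomputable def eSum {ι : Type} [Fintype ι] (v : ι → ℝ) (m : ℕ) : ℝ :=
  sSup {x | ∃ s : Finset ι, s.card = m ∧ x = ∑ i ∈ s, v i}

/-- Majorization `x ≺ y`: partial sums of largest entries of `x` are dominated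
by those of `y`, with equal total sums. -/
def Maj {ι κ : Type} [Fintype ι] [Fintype κ] (x : ι → ℝ) (y : κ → ℝ) : Prop :=
  (∀ m : ℕ, 1 ≤ m → m < Fintype.card ι → eSum x m ≤ eSum y m) ∧
    ∑ i, x i = ∑ j, y j

/-- Strict majorization `x ◁ y`: all inequalities strict, total sums equal. -/
def SMaj {ι κ : Type} [Fintype ι] [Fintype κ] (x : ι → ℝ) (y : κ → ℝ) : Prop :=
  (∀ m : ℕ, 1 ≤ m → m < Fintype.card ι → eSum x m < eSum y m) ∧
    ∑ i, x i = ∑ j, y j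

/-- Global uniformity: smallest entry divided by largest entry. -/
noncomputable def gu {ι : Type} [Fintype ι] (v : ι → ℝ) : ℝ :=
  sInf (Set.range v) / sSup (Set.range v)

/-- The set of ratios `v b / v a` over consecutive distinct values `v b < v a`
(no value strictly in between). -/
def ratioSet {ι : Type} [Fintype ι] (v : ι → ℝ) : Set ℝ :=
  {r | ∃ a b : ι, v b < v a ∧ (¬ ∃ c : ι, v b < v c ∧ v c < v a) ∧ r = v b / v a}

open Classical in
noncomputable def lu {ι : Type} [Fintype ι] (v : ι → ℝ) : ℝ :=
  if (∃ a b : ι, v a ≠ v b) then sInf (ratioSet v) else 1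

open Classical in
/-- Maximal local uniformity: maximum ratio of consecutive distinct values;
`1` for a constant vector. -/
noncomputable def Lu {ι : Type} [Fintype ι] (v : ι → ℝ) : ℝ :=
  if (∃ a b : ι, v a ≠ v b) then sSup (ratioSet v) else 1

/-- Tensor (Kronecker) product of two vectors. -/
def tens {ι κ : Type} (x : ι → ℝ) (y : κ → ℝ) : ι × κ → ℝ :=
  fun p => x p.1 * y p.2

/-- `k`-fold tensor power of a vector. -/
def tpow {n : ℕ} (v : Fin n → ℝ) (k : ℕ) : (Fin k → Fin n) → ℝ :=
  fun f => ∏ i, v (f i)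

/-- A probability vector: nonnegative entries summing to one. -/
def IsProb {ι : Type} [Fintype ι] (v : ι → ℝ) : Prop :=
  (∀ i, 0 ≤ v i) ∧ ∑ i, v i = 1

/-- `v` sorted in non-increasing order. -/
noncomputable def sortDesc {n : ℕ} (v : Fin n → ℝ) : Fin n → ℝ :=
  fun i => v (Tuple.sort v i.rev)

/-- Shannon entropy (base 2), with the convention `0 log 0 = 0`. -/
noncomputable def entH {ι : Type} [Fintype ι] (v : ι → ℝ) : ℝ :=
  -∑ i, v i * Real.logb 2 (v i)

lemma eSum_set_finite {ι : Type} [Fintype ι] (v : ι → ℝ) (m : ℕ) :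
    {x | ∃ s : Finset ι, s.card = m ∧ x = ∑ i ∈ s, v i}.Finite :=
  Set.Finite.subset (Set.finite_range (fun s : Finset ι => ∑ i ∈ s, v i))
    (by rintro x ⟨s, -, rfl⟩; exact ⟨s, rfl⟩)

lemma le_eSum {ι : Type} [Fintype ι] (v : ι → ℝ) (s : Finset ι) :
    ∑ i ∈ s, v i ≤ eSum v s.card :=
  le_csSup (eSum_set_finite v s.card).bddAbove ⟨s, rfl, rfl⟩

lemma eSum_exists {ι : Type} [Fintype ι] (v : ι → ℝ) (m : ℕ) (hm : m ≤ Fintype.card ι) :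
    ∃ s : Finset ι, s.card = m ∧ eSum v m = ∑ i ∈ s, v i := by
  obtain ⟨s, -, hs⟩ := Finset.exists_subset_card_eq (s := (univ : Finset ι)) (n := m) (by simpa using hm)
  have hne : {x | ∃ s : Finset ι, s.card = m ∧ x = ∑ i ∈ s, v i}.Nonempty :=
    ⟨∑ i ∈ s, v i, s, hs, rfl⟩
  exact Set.Nonempty.csSup_mem hne (eSum_set_finite v m)

lemma eSum_zero {ι : Type} [Fintype ι] (v : ι → ℝ) : eSum v 0 = 0 := by
  have h : {x | ∃ s : Finset ι, s.card = 0 ∧ x = ∑ i ∈ s, v i} = {(0:ℝ)} := by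
    ext x; simp [Finset.card_eq_zero]
  rw [eSum, h, csSup_singleton]

lemma eSum_top {ι : Type} [Fintype ι] (v : ι → ℝ) :
    eSum v (Fintype.card ι) = ∑ i, v i := by
  have h : {x | ∃ s : Finset ι, s.card = Fintype.card ι ∧ x = ∑ i ∈ s, v i} = {∑ i, v i} := by
    ext x
    simp only [Set.mem_setOf_eq, Set.mem_singleton_iff]
    constructor
    · rintro ⟨s, hs, rfl⟩
      rw [Finset.card_eq_iff_eq_univ] at hs
      rw [hs]
    · rintro rfl; exact ⟨univ, Finset.card_univ, rfl⟩
  rw [eSum, h, csSup_singleton]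

lemma fiber_decomp {n k : ℕ} (x : Fin n → ℝ) (χ : Fin k → ℝ)
    (s : Finset (Fin n × Fin k)) :
    ∑ p ∈ s, x p.1 * χ p.2
      = ∑ j : Fin k, χ j * ∑ i ∈ (s.filter (fun p => p.2 = j)).image Prod.fst, x i := by
  rw [← Finset.sum_fiberwise s Prod.snd (fun p => x p.1 * χ p.2)]
  refine Finset.sum_congr rfl fun j _ => ?_
  rw [Finset.sum_image (fun p hp q hq hpq => ?_), Finset.mul_sum]
  · refine Finset.sum_congr rfl fun p hp => ?_
    simp only [Finset.mem_filter] at hp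
    rw [hp.2]; ring
  · simp only [Finset.mem_coe, Finset.mem_filter] at hp hq
    exact Prod.ext hpq (hp.2.trans hq.2.symm)

lemma fiber_card {n k : ℕ} (s : Finset (Fin n × Fin k)) (j : Fin k) :
    ((s.filter (fun p => p.2 = j)).image Prod.fst).card = (s.filter (fun p => p.2 = j)).card :=
  Finset.card_image_of_injOn (fun p hp q hq hpq => by
    simp only [Finset.mem_coe, Finset.mem_filter] at hp hq
    exact Prod.ext hpq (hp.2.trans hq.2.symm))

lemma sum_split {κ : Type} [Fintype κ] [DecidableEq κ] {M : Type} [AddCommMonoid M] (f : κ → M) (a b : κ)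
    (hab : a ≠ b) :
    ∑ j, f j = f a + f b + ∑ j ∈ (univ.erase a).erase b, f j := by
  rw [← Finset.add_sum_erase _ f (mem_univ a),
      ← Finset.add_sum_erase _ f (Finset.mem_erase.2 ⟨hab.symm, mem_univ b⟩), add_assoc]

lemma build_set {n k : ℕ} (t : Fin k → Finset (Fin n)) :
    ∃ S : Finset (Fin n × Fin k), S.card = ∑ j, (t j).card ∧
      ∀ x : Fin n → ℝ, ∀ χ : Fin k → ℝ, ∑ p ∈ S, x p.1 * χ p.2 = ∑ j, χ j * ∑ i ∈ t j, x i := by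
  classical
  refine ⟨univ.filter (fun p => p.1 ∈ t p.2), ?_, ?_⟩
  · rw [Finset.card_eq_sum_card_fiberwise (f := Prod.snd) (t := univ) (fun p _ => mem_univ p.2)]
    refine Finset.sum_congr rfl fun j _ => ?_
    have : (univ.filter (fun p : Fin n × Fin k => p.1 ∈ t p.2)).filter (fun p => p.2 = j)
        = (t j).image (fun i => (i, j)) := by
      ext ⟨i, j'⟩
      simp only [Finset.mem_filter, Finset.mem_univ, true_and, Finset.mem_image]
      constructor
      · rintro ⟨h1, rfl⟩; exact ⟨i, h1, rfl⟩
      · rintro ⟨i', hi', h⟩; cases h; exact ⟨hi', rfl⟩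
    rw [this, Finset.card_image_of_injective _ (fun x y hxy => by injection hxy)]
  · intro x χ
    rw [fiber_decomp]
    refine Finset.sum_congr rfl fun j _ => ?_
    congr 1
    refine Finset.sum_congr ?_ fun _ _ => rfl
    ext i
    simp only [Finset.mem_image, Finset.mem_filter, Finset.mem_univ, true_and]
    constructor
    · rintro ⟨⟨i', j'⟩, ⟨h1, rfl⟩, rfl⟩; exact h1
    · intro hi; exact ⟨(i, j), ⟨hi, rfl⟩, rfl⟩
theorem strict_majorization_tensor_of_lu_gt_gu {n k : ℕ}
    (φ : Fin n → ℝ) (χ : Fin k → ℝ)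
    (hφprob : IsProb φ) (hχprob : IsProb χ)
    (hφpos : ∀ i, 0 < φ i) (hχpos : ∀ i, 0 < χ i)
    (hχnc : ∃ a b : Fin k, χ a ≠ χ b)
    (h : gu φ < lu χ) :
    ∀ ψ : Fin n → ℝ, SMaj ψ φ → SMaj (tens ψ χ) (tens φ χ) := by
  classical
  intro ψ hψ
  have hsumφ : ∑ i, φ i = 1 := hφprob.2
  have hsumψ : ∑ i, ψ i = 1 := hψ.2.trans hsumφ
  have htot : ∀ x : Fin n → ℝ, ∑ p : Fin n × Fin k, tens x χ p = (∑ i, x i) * (∑ j, χ j) := by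
    intro x
    rw [Fintype.sum_prod_type]
    simp only [tens]
    rw [Finset.sum_mul]
    exact Finset.sum_congr rfl fun i _ => by rw [Finset.mul_sum]
  refine ⟨?_, by rw [htot, htot, hψ.2]⟩
  intro m hm1 hm2
  have hcard : Fintype.card (Fin n × Fin k) = n * k := by simp
  rw [hcard] at hm2
  -- n, k positive
  have hn : 0 < n := by rcases Nat.eq_zero_or_pos n with rfl | h'; · simp at hm2
                        · exact h'
  have hk : 0 < k := by rcases Nat.eq_zero_or_pos k with rfl | h'; · simp at hm2
                        · exact h'
  haveI : Nonempty (Fin n) := ⟨⟨0, hn⟩⟩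
  -- min and max of φ
  obtain ⟨imin, himin⟩ : ∃ i, φ i = sInf (Set.range φ) := by
    obtain ⟨i, hi⟩ := (Set.range_nonempty φ).csInf_mem (Set.finite_range φ)
    exact ⟨i, hi⟩
  obtain ⟨imax, himax⟩ : ∃ i, φ i = sSup (Set.range φ) := by
    obtain ⟨i, hi⟩ := (Set.range_nonempty φ).csSup_mem (Set.finite_range φ)
    exact ⟨i, hi⟩
  have himin_le : ∀ i, φ imin ≤ φ i := fun i => by
    rw [himin]; exact csInf_le (Set.finite_range φ).bddBelow ⟨i, rfl⟩
  have hle_imax : ∀ i, φ i ≤ φ imax := fun i => by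
    rw [himax]; exact le_csSup (Set.finite_range φ).bddAbove ⟨i, rfl⟩
  -- lu facts
  have hlu : lu χ = sInf (ratioSet χ) := by rw [lu, if_pos hχnc]
  have hbddR : BddBelow (ratioSet χ) :=
    ⟨0, by rintro r ⟨a, b, hab, -, rfl⟩; exact le_of_lt (div_pos (hχpos b) (hχpos a))⟩
  have hlu1 : lu χ < 1 := by
    obtain ⟨p, q, hpq⟩ := hχnc
    have : ∃ p q : Fin k, χ q < χ p := by
      rcases lt_or_gt_of_ne hpq with h' | h'
      · exact ⟨q, p, h'⟩
      · exact ⟨p, q, h'⟩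
    obtain ⟨p, q, hqp⟩ := this
    obtain ⟨a', ha'F, ha'min⟩ := Finset.exists_min_image
      (univ.filter (fun c => χ q < χ c)) χ ⟨p, by simp [hqp]⟩
    have ha' : χ q < χ a' := (Finset.mem_filter.1 ha'F).2
    have hmem : χ q / χ a' ∈ ratioSet χ := by
      refine ⟨a', q, ha', ?_, rfl⟩
      rintro ⟨c, hc1, hc2⟩
      exact absurd (ha'min c (Finset.mem_filter.2 ⟨mem_univ c, hc1⟩)) (not_le.2 hc2)
    calc lu χ ≤ χ q / χ a' := hlu ▸ csInf_le hbddR hmem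
    _ < 1 := (div_lt_one (hχpos a')).2 ha'
  have hmm : φ imin < φ imax := by
    have hgu : gu φ < 1 := lt_trans h hlu1
    rw [gu, ← himin, ← himax] at hgu
    exact (div_lt_one (hφpos imax)).1 hgu
  -- eSum comparison
  have hψn : eSum ψ n = 1 := by
    have := eSum_top ψ; rw [Fintype.card_fin] at this; rw [this, hsumψ]
  have hφn : eSum φ n = 1 := by
    have := eSum_top φ; rw [Fintype.card_fin] at this; rw [this, hsumφ]
  have hstrict : ∀ m', 1 ≤ m' → m' < n → eSum ψ m' < eSum φ m' := by
    intro m' h1 h2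
    exact hψ.1 m' h1 (by simpa using h2)
  have hle : ∀ m', m' ≤ n → eSum ψ m' ≤ eSum φ m' := by
    intro m' hm'
    rcases Nat.eq_zero_or_pos m' with rfl | h1
    · rw [eSum_zero, eSum_zero]
    rcases eq_or_lt_of_le hm' with rfl | h2
    · rw [hψn, hφn]
    · exact le_of_lt (hstrict m' h1 h2)
  -- optimal set for ψ ⊗ χ
  obtain ⟨s, hscard, hsval⟩ := eSum_exists (tens ψ χ) m (by rw [hcard]; exact le_of_lt hm2)
  set fib : Fin k → Finset (Fin n) := fun j => (s.filter (fun p => p.2 = j)).image Prod.fst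
    with hfib
  set mj : Fin k → ℕ := fun j => (fib j).card with hmj
  have hmsum : ∑ j, mj j = m := by
    rw [← hscard, Finset.card_eq_sum_card_fiberwise (f := Prod.snd) (t := univ)
      (fun p _ => mem_univ p.2)]
    exact Finset.sum_congr rfl fun j _ => (fiber_card s j)
  have hmj_le : ∀ j, mj j ≤ n := fun j => by
    simpa using Finset.card_le_univ (fib j)
  have hub : eSum (tens ψ χ) m ≤ ∑ j, χ j * eSum ψ (mj j) := by
    rw [hsval]
    have : ∑ p ∈ s, tens ψ χ p = ∑ j, χ j * ∑ i ∈ fib j, ψ i := fiber_decomp ψ χ s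
    rw [this]
    exact Finset.sum_le_sum fun j _ =>
      mul_le_mul_of_nonneg_left (le_eSum ψ (fib j)) (hχprob.1 j)
  -- lower bound for φ ⊗ χ from a choice of subsets
  have hlb : ∀ t : Fin k → Finset (Fin n), (∑ j, (t j).card) = m →
      ∑ j, χ j * ∑ i ∈ t j, φ i ≤ eSum (tens φ χ) m := by
    intro t ht
    obtain ⟨S, hS1, hS2⟩ := build_set t
    have h1 := le_eSum (tens φ χ) S
    rw [hS1, ht] at h1
    have h2 : ∑ p ∈ S, tens φ χ p = ∑ j, χ j * ∑ i ∈ t j, φ i := hS2 φ χ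
    rw [h2] at h1
    exact h1
  by_cases hmid : ∃ j0, 1 ≤ mj j0 ∧ mj j0 < n
  · -- case 1: some fiber is strictly between 0 and n
    obtain ⟨j0, hj01, hj02⟩ := hmid
    have hlt : ∑ j, χ j * eSum ψ (mj j) < ∑ j, χ j * eSum φ (mj j) :=
      Finset.sum_lt_sum
        (fun j _ => mul_le_mul_of_nonneg_left (hle _ (hmj_le j)) (hχprob.1 j))
        ⟨j0, mem_univ _, mul_lt_mul_of_pos_left (hstrict _ hj01 hj02) (hχpos j0)⟩
    choose t ht1 ht2 using fun j => eSum_exists φ (mj j) (by simpa using hmj_le j)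
    have hsum_t : ∑ j, (t j).card = m := by rw [← hmsum]; exact Finset.sum_congr rfl fun j _ => ht1 j
    have hfin : ∑ j, χ j * eSum φ (mj j) ≤ eSum (tens φ χ) m := by
      have : ∑ j, χ j * eSum φ (mj j) = ∑ j, χ j * ∑ i ∈ t j, φ i :=
        Finset.sum_congr rfl fun j _ => by rw [ht2 j]
      rw [this]; exact hlb t hsum_t
    linarith
  · -- case 2: every fiber is all or nothing
    push_neg at hmid
    have hall : ∀ j, mj j = 0 ∨ mj j = n := fun j => by
      rcases Nat.eq_zero_or_pos (mj j) with h0 | h1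
      · exact Or.inl h0
      · exact Or.inr (le_antisymm (hmj_le j) (hmid j h1))
    set T := univ.filter (fun j => mj j = n) with hT
    have hTa : ∃ a, a ∈ T := by
      by_contra hc
      push_neg at hc
      have : ∀ j, mj j = 0 := by
        intro j
        rcases hall j with h0 | h1
        · exact h0
        · exact absurd (Finset.mem_filter.2 ⟨mem_univ j, h1⟩) (hc j)
      have h0 : m = 0 := by
        rw [← hmsum]
        exact Finset.sum_eq_zero fun j _ => this j
      omega
    have hTb : ∃ b, mj b = 0 := by
      by_contra hc
      push_neg at hc
      have : ∀ j, mj j = n := fun j => (hall j).resolve_left (hc j)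
      rw [Finset.sum_congr rfl (fun j _ => this j), Finset.sum_const, Finset.card_univ,
        Fintype.card_fin, smul_eq_mul] at hmsum
      have hmc : n * k = k * n := Nat.mul_comm n k
      omega
    obtain ⟨a, haT, hamin⟩ := Finset.exists_min_image T χ (hTa.imp fun a ha => ha)
    obtain ⟨b, hbF, hbmax⟩ := Finset.exists_max_image (univ.filter (fun j => mj j = 0)) χ
      (hTb.imp fun b hb => Finset.mem_filter.2 ⟨mem_univ b, hb⟩)
    have hma : mj a = n := (Finset.mem_filter.1 haT).2
    have hmb : mj b = 0 := (Finset.mem_filter.1 hbF).2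
    have hab : a ≠ b := fun h' => by rw [h', hmb] at hma; omega
    -- key inequality
    have hkey : χ a * φ imin < χ b * φ imax := by
      rcases le_or_gt (χ a) (χ b) with h' | h'
      · calc χ a * φ imin < χ a * φ imax := by
              exact mul_lt_mul_of_pos_left hmm (hχpos a)
        _ ≤ χ b * φ imax := mul_le_mul_of_nonneg_right h' (le_of_lt (hφpos imax))
      · have hmem : χ b / χ a ∈ ratioSet χ := by
          refine ⟨a, b, h', ?_, rfl⟩
          rintro ⟨c, hc1, hc2⟩
          rcases hall c with h0 | h1
          · exact absurd (hbmax c (Finset.mem_filter.2 ⟨mem_univ c, h0⟩)) (not_le.2 hc1)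
          · exact absurd (hamin c (Finset.mem_filter.2 ⟨mem_univ c, h1⟩)) (not_le.2 hc2)
        have hr : gu φ < χ b / χ a := lt_of_lt_of_le h (hlu ▸ csInf_le hbddR hmem)
        rw [gu, ← himin, ← himax, div_lt_div_iff₀ (hφpos imax) (hχpos a)] at hr
        linarith [hr]
    -- the modified split for φ
    set t : Fin k → Finset (Fin n) := fun j =>
      if j = a then univ.erase imin else if j = b then {imax}
      else if mj j = n then univ else ∅ with ht
    have hta : t a = univ.erase imin := by simp [ht]
    have htb : t b = {imax} := by simp [ht, hab.symm]
    have htrest : ∀ j, j ≠ a → j ≠ b → t j = if mj j = n then univ else ∅ := by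
      intro j h1 h2; simp [ht, h1, h2]
    have hrestcard : ∀ j ∈ (univ.erase a).erase b, (t j).card = mj j := by
      intro j hj
      obtain ⟨hjb, hja, -⟩ : j ≠ b ∧ j ≠ a ∧ True := by
        simp only [Finset.mem_erase, Finset.mem_univ, and_true] at hj; exact ⟨hj.1, hj.2, trivial⟩
      rw [htrest j hja hjb]
      rcases hall j with h0 | h1
      · rw [if_neg (by omega), h0]; rfl
      · rw [if_pos h1, h1]; simp
    have hma_ge : n ≤ m := by
      rw [← hmsum]
      calc n = mj a := hma.symm
      _ ≤ ∑ j, mj j := Finset.single_le_sum (fun j _ => Nat.zero_le _) (mem_univ a)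
    have hcard_t : ∑ j, (t j).card = m := by
      rw [sum_split (fun j => (t j).card) a b hab, hta, htb,
        Finset.sum_congr rfl hrestcard]
      have hms : m = mj a + mj b + ∑ j ∈ (univ.erase a).erase b, mj j := by
        rw [← hmsum]; exact sum_split mj a b hab
      rw [Finset.card_erase_of_mem (mem_univ imin), Finset.card_univ, Fintype.card_fin,
        Finset.card_singleton]
      have he : ∑ j ∈ (univ.erase a).erase b, mj j = ((univ.erase a).erase b).sum mj := rfl
      omega
    -- value of the split
    have hrestval : ∀ j ∈ (univ.erase a).erase b,
        χ j * ∑ i ∈ t j, φ i = χ j * eSum ψ (mj j) := by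
      intro j hj
      obtain hjb : j ≠ b := (Finset.mem_erase.1 hj).1
      obtain hja : j ≠ a := (Finset.mem_erase.1 (Finset.mem_erase.1 hj).2).1
      rw [htrest j hja hjb]
      rcases hall j with h0 | h1
      · rw [if_neg (by omega), h0, eSum_zero, Finset.sum_empty]
      · rw [if_pos h1, h1, hψn, hsumφ]
    have hval : ∑ j, χ j * eSum ψ (mj j) < ∑ j, χ j * ∑ i ∈ t j, φ i := by
      rw [sum_split (fun j => χ j * eSum ψ (mj j)) a b hab,
        sum_split (fun j => χ j * ∑ i ∈ t j, φ i) a b hab,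
        Finset.sum_congr rfl hrestval, hta, htb]
      rw [hma, hmb, hψn, eSum_zero, Finset.sum_singleton,
        Finset.sum_erase_eq_sub (mem_univ imin), hsumφ]
      nlinarith [hkey]
    linarith [hub, hval, hlb t hcard_t]
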